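/- Consider two insertions into a totally ordered linked list using the RGA rule: a new element with timestamp id is inserted starting after position prev by skipping over all successive elements whose timestamp is greater than id, then splicing in before the first element with smaller timestamp (or at the end). If two concurrent insertions with distinct timestamps id_r > id_s both have the same starting position prev, then in the final list id_r appears before id_s, regardless of the order in which the two insertions are applied. -/

import Mathlib

/-- RGA insertion of a new timestamp `id` into the list segment following its insertion
position: skip over successive elements whose timestamp is greater than `id`, then splice
`id` in before the first element with smaller timestamp (or at the end). -/
def rgaBody (id : ℕ) : List ℕ → List ℕ
  | [] => [id]
  | x :: xs => if x < id then id :: x :: xs else x :: rgaBody id xs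

/-- `a` appears before `b` in the list `l`. -/
def appearsBefore (a b : ℕ) (l : List ℕ) : Prop :=
  l.idxOf a < l.idxOf b

lemma before_cons_self {idr ids : ℕ} (h : idr ≠ ids) (rest : List ℕ) :
    appearsBefore idr ids (idr :: rest) := by
  unfold appearsBefore
  rw [List.idxOf_cons_self, List.idxOf_cons_ne _ h]
  omega

lemma before_cons {a idr ids : ℕ} {l : List ℕ} (h1 : idr ≠ a) (h2 : ids ≠ a)
    (h : appearsBefore idr ids l) : appearsBefore idr ids (a :: l) := by
  unfold appearsBefore at *
  rw [List.idxOf_cons_ne _ h1.symm, List.idxOf_cons_ne _ h2.symm]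
  omega

/-- If two concurrent RGA insertions with distinct timestamps `id_r > id_s` start at the
same position (here: the head of the segment `L`), then the element with the greater
timestamp `id_r` appears before `id_s` in the final list, regardless of the order in
which the two insertions are applied. -/
theorem rga_insert_conflict (L : List ℕ) (idr ids : ℕ)
    (h : ids < idr) (hr : idr ∉ L) (hs : ids ∉ L) :
    appearsBefore idr ids (rgaBody ids (rgaBody idr L)) ∧
    appearsBefore idr ids (rgaBody idr (rgaBody ids L)) := by
  have hne : idr ≠ ids := by omega
  induction L with
  | nil =>
    constructor
    · show appearsBefore idr ids (rgaBody ids [idr])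
      simp only [rgaBody, if_neg (by omega : ¬ idr < ids)]
      exact before_cons_self hne _
    · show appearsBefore idr ids (rgaBody idr [ids])
      simp only [rgaBody, if_pos h]
      exact before_cons_self hne _
  | cons x xs ih =>
    have hrx : idr ≠ x := fun e => hr (e ▸ List.mem_cons_self (a := x) (l := xs))
    have hsx : ids ≠ x := fun e => hs (e ▸ List.mem_cons_self (a := x) (l := xs))
    have hr' : idr ∉ xs := fun m => hr (List.mem_cons_of_mem _ m)
    have hs' : ids ∉ xs := fun m => hs (List.mem_cons_of_mem _ m)
    by_cases hxr : x < idr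
    · by_cases hxs : x < ids
      · constructor
        · simp only [rgaBody, if_pos hxr, if_neg (by omega : ¬ idr < ids), if_pos hxs]
          exact before_cons_self hne _
        · simp only [rgaBody, if_pos hxs, if_pos h]
          exact before_cons_self hne _
      · constructor
        · simp only [rgaBody, if_pos hxr, if_neg (by omega : ¬ idr < ids), if_neg hxs]
          exact before_cons_self hne _
        · simp only [rgaBody, if_neg hxs, if_pos hxr]
          exact before_cons_self hne _
    · have hxs : ¬ x < ids := by omega
      obtain ⟨ih1, ih2⟩ := ih hr' hs'
      constructor
      · simp only [rgaBody, if_neg hxr, if_neg hxs]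
        exact before_cons hrx hsx ih1
      · simp only [rgaBody, if_neg hxs, if_neg hxr]
        exact before_cons hrx hsx ih2
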